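/- A semigroup X is inverse if and only if the image of X under the embedding x ↦ ⟨x⟩ lies in some inverse subsemigroup S of the semigroup υ(X). -/
import Mathlib


open Set

/-- An *upfamily* on `X`: a nonempty family of nonempty subsets of `X`
that is closed under taking supersets. -/
def IsUpfamily {X : Type*} (F : Set (Set X)) : Prop :=
  F.Nonempty ∧ (∀ A ∈ F, A.Nonempty) ∧ ∀ A ∈ F, ∀ B : Set X, A ⊆ B → B ∈ F

/-- The space `υ(X)` of upfamilies on `X`. -/
def Upfamily (X : Type*) : Type _ := {F : Set (Set X) // IsUpfamily F}

/-- The extension of the binary operation of `X` to families of subsets of `X`: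
`𝓐*𝓑 = ⟨⋃_{a ∈ A} a*B_a : A ∈ 𝓐, {B_a}_{a∈A} ⊆ 𝓑⟩`. -/
def upMul {X : Type*} [Mul X] (F G : Set (Set X)) : Set (Set X) :=
  {C | ∃ A ∈ F, ∃ B : X → Set X, (∀ a ∈ A, B a ∈ G) ∧ (⋃ a ∈ A, (fun y => a * y) '' B a) ⊆ C}

theorem IsUpfamily.upMul {X : Type*} [Mul X] {F G : Set (Set X)}
    (hF : IsUpfamily F) (hG : IsUpfamily G) : IsUpfamily (upMul F G) := by
  obtain ⟨⟨A0, hA0⟩, hFne, hFup⟩ := hF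
  obtain ⟨⟨B0, hB0⟩, hGne, hGup⟩ := hG
  refine ⟨⟨univ, A0, hA0, fun _ => B0, fun a _ => hB0, subset_univ _⟩, ?_, ?_⟩
  · rintro C ⟨A, hA, B, hB, hsub⟩
    obtain ⟨a, ha⟩ := hFne A hA
    obtain ⟨b, hb⟩ := hGne (B a) (hB a ha)
    exact ⟨a * b, hsub (mem_biUnion ha ⟨b, hb, rfl⟩)⟩
  · rintro C ⟨A, hA, B, hB, hsub⟩ D hCD
    exact ⟨A, hA, B, hB, hsub.trans hCD⟩

/-- `υ(X)` is a semigroup under the extended operation. -/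
instance {X : Type*} [Mul X] : Mul (Upfamily X) :=
  ⟨fun F G => ⟨upMul F.1 G.1, F.2.upMul G.2⟩⟩

/-- The embedding `X → υ(X)`, `x ↦ ⟨x⟩ = {A ⊆ X : x ∈ A}`. -/
def Upfamily.principal {X : Type*} (x : X) : Upfamily X :=
  ⟨{A | x ∈ A}, ⟨univ, mem_univ x⟩, fun A hA => ⟨x, hA⟩, fun _ hA _ hAB => hAB hA⟩

/-- An upfamily is linked if any two of its members intersect. -/
def Upfamily.Linked {X : Type*} (F : Upfamily X) : Prop :=
  ∀ A ∈ F.1, ∀ B ∈ F.1, (A ∩ B).Nonempty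

/-- Maximal linked upfamilies. -/
def Upfamily.IsMaxLinked {X : Type*} (F : Upfamily X) : Prop :=
  F.Linked ∧ ∀ G : Upfamily X, G.Linked → F.1 ⊆ G.1 → F = G

/-- Filters: upfamilies closed under binary intersections. -/
def Upfamily.IsFilter {X : Type*} (F : Upfamily X) : Prop :=
  ∀ A ∈ F.1, ∀ B ∈ F.1, A ∩ B ∈ F.1

/-- Ultrafilters: maximal filters. -/
def Upfamily.IsUltrafilter {X : Type*} (F : Upfamily X) : Prop :=
  F.IsFilter ∧ ∀ G : Upfamily X, G.IsFilter → F.1 ⊆ G.1 → F = G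

/-- The superextension `λ(X)` of maximal linked upfamilies. -/
def lambdaS (X : Type*) : Set (Upfamily X) := {F | F.IsMaxLinked}

/-- The semigroup `N₂(X)` of linked upfamilies. -/
def N2S (X : Type*) : Set (Upfamily X) := {F | F.Linked}

/-- The semigroup `φ(X)` of filters. -/
def phiS (X : Type*) : Set (Upfamily X) := {F | F.IsFilter}

/-- The Stone-Čech extension `β(X)` of ultrafilters. -/
def betaS (X : Type*) : Set (Upfamily X) := {F | F.IsUltrafilter}

section SemigroupProps

variable {M : Type*} [Mul M]

/-- A subset closed under multiplication (i.e. a subsemigroup). -/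
def mulClosed (S : Set M) : Prop := ∀ a ∈ S, ∀ b ∈ S, a * b ∈ S

/-- The operation is commutative on `S`. -/
def commOn (S : Set M) : Prop := ∀ a ∈ S, ∀ b ∈ S, a * b = b * a

/-- The idempotents of `S` commute. -/
def idemCommOn (S : Set M) : Prop :=
  ∀ a ∈ S, ∀ b ∈ S, a * a = a → b * b = b → a * b = b * a

/-- `S` is an inverse semigroup: every element has a unique inverse in `S`. -/
def inverseOn (S : Set M) : Prop :=
  ∀ a ∈ S, ∃! b, b ∈ S ∧ a * b * a = a ∧ b * a * b = b

/-- `H` is a subgroup of the ambient multiplicative structure: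
it is closed under multiplication and carries a group structure. -/
def IsSubgroupIn (H : Set M) : Prop :=
  (∀ a ∈ H, ∀ b ∈ H, a * b ∈ H) ∧
    ∃ e ∈ H, (∀ a ∈ H, e * a = a ∧ a * e = a) ∧ ∀ a ∈ H, ∃ b ∈ H, a * b = e ∧ b * a = e

/-- `S` is a Clifford semigroup: a union of groups. -/
def cliffordOn (S : Set M) : Prop := ∀ a ∈ S, ∃ H ⊆ S, IsSubgroupIn H ∧ a ∈ H

/-- `S` is regular in `T`: every `a ∈ S` satisfies `a ∈ a T a`. -/
def regularIn (S T : Set M) : Prop := ∀ a ∈ S, ∃ b ∈ T, a * b * a = a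

/-- `ppow a n = a^(n+1)`: positive powers in a semigroup. -/
def ppow (a : M) : ℕ → M
  | 0 => a
  | n + 1 => ppow a n * a

/-- `S` is sub-Clifford: `x^{n+1} = x^{m+1}` implies `x^n = x^m` for positive `n < m`. -/
def subCliffordOn (S : Set M) : Prop :=
  ∀ a ∈ S, ∀ n m : ℕ, n < m → ppow a (n + 1) = ppow a (m + 1) → ppow a n = ppow a m

end SemigroupProps

/-- The cyclic group `Cₙ` of order `n`. -/
abbrev Cgrp (n : ℕ) : Type := Multiplicative (ZMod n)

/-- The linear semilattice `Lₙ = {0,…,n-1}` with the operation of minimum. -/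
def L (n : ℕ) : Type := Fin n

instance {n : ℕ} : Mul (L n) :=
  ⟨fun a b => show Fin n from min (show Fin n from a) (show Fin n from b)⟩

/-- The disjoint ordered union `X ⊔ Y` of two semigroups, in which
`x * y = y * x = x` for `x ∈ X` and `y ∈ Y`. -/
abbrev OSum (A B : Type*) : Type _ := A ⊕ B

instance {A B : Type*} [Mul A] [Mul B] : Mul (OSum A B) :=
  ⟨fun x y =>
    match x, y with
    | Sum.inl a, Sum.inl a' => Sum.inl (a * a')
    | Sum.inl a, Sum.inr _ => Sum.inl a
    | Sum.inr _, Sum.inl a => Sum.inl a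
    | Sum.inr b, Sum.inr b' => Sum.inr (b * b')⟩

/-- `M` is isomorphic to the sub-semigroup `S` of `N`: there is an injective
operation-preserving map of `M` onto `S`. -/
def MulIsoOnto (M : Type*) [Mul M] {N : Type*} [Mul N] (S : Set N) : Prop :=
  ∃ f : M → N, Function.Injective f ∧ Set.range f = S ∧ ∀ x y : M, f (x * y) = f x * f y

lemma principal_mul_principal {X : Type*} [Mul X] (x y : X) :
    Upfamily.principal x * Upfamily.principal y = Upfamily.principal (x * y) := by
  apply Subtype.ext
  ext C
  constructor
  · rintro ⟨A, hA, B, hB, hsub⟩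
    exact hsub (Set.mem_biUnion hA ⟨y, hB x hA, rfl⟩)
  · intro hC
    refine ⟨{x}, rfl, fun _ => {y}, fun a _ => rfl, ?_⟩
    simp only [Set.mem_singleton_iff, Set.iUnion_iUnion_eq_left, Set.image_singleton,
      Set.singleton_subset_iff]
    exact hC

lemma principal_injective {X : Type*} : Function.Injective (Upfamily.principal (X := X)) := by
  intro x y h
  have hx : ({x} : Set X) ∈ (Upfamily.principal x).1 := rfl
  rw [h] at hx
  exact (hx : y ∈ ({x} : Set X)).symm

lemma inv_of_weak {X : Type*} [Semigroup X] {x b : X} (h : x * b * x = x) :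
    x * (b * x * b) * x = x ∧ (b * x * b) * x * (b * x * b) = b * x * b := by
  have hbx : (b * x) * (b * x) = b * x := by
    rw [mul_assoc b x (b * x), ← mul_assoc x b x, h]
  have hzx : (b * x * b) * x = b * x := by
    rw [mul_assoc (b * x) b x, hbx]
  have h1 : x * (b * x * b) = x * b := by
    rw [← mul_assoc, ← mul_assoc, h]
  constructor
  · rw [h1]; exact h
  · rw [hzx, ← mul_assoc (b * x) (b * x) b, hbx]

/-- Corollary 3.2: a semigroup `X` is inverse if and only if the image of `X`
under `x ↦ ⟨x⟩` lies in some inverse subsemigroup `S ⊆ υ(X)`. -/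
theorem inverse_iff_lies_in_inverse_subsemigroup (X : Type*) [Semigroup X] :
    (∀ x : X, ∃! y : X, x * y * x = x ∧ y * x * y = y) ↔
      ∃ S : Set (Upfamily X), mulClosed S ∧ inverseOn S ∧
        ∀ x : X, Upfamily.principal x ∈ S := by
  constructor
  · intro hX
    refine ⟨Set.range Upfamily.principal, ?_, ?_, fun x => ⟨x, rfl⟩⟩
    · rintro _ ⟨a, rfl⟩ _ ⟨b, rfl⟩
      exact ⟨a * b, (principal_mul_principal a b).symm⟩
    · rintro _ ⟨x, rfl⟩
      obtain ⟨y, ⟨hy1, hy2⟩, hyu⟩ := hX x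
      refine ⟨Upfamily.principal y, ⟨⟨y, rfl⟩, ?_, ?_⟩, ?_⟩
      · rw [principal_mul_principal, principal_mul_principal, hy1]
      · rw [principal_mul_principal, principal_mul_principal, hy2]
      · rintro _ ⟨⟨y', rfl⟩, h1, h2⟩
        rw [principal_mul_principal, principal_mul_principal] at h1 h2
        have := hyu y' ⟨principal_injective h1, principal_injective h2⟩
        rw [this]
  · rintro ⟨S, hclosed, hinv, hP⟩ x
    obtain ⟨B, ⟨hBS, h1, h2⟩, huniq⟩ := hinv (Upfamily.principal x) (hP x)
    -- existence of an inverse in X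
    have hx1 : ({x} : Set X) ∈ (Upfamily.principal x * B * Upfamily.principal x).1 := by
      rw [h1]; exact rfl
    obtain ⟨A, hA, Bf, hBf, hsub⟩ := hx1
    obtain ⟨A', hA', Bf', hBf', hsub'⟩ := hA
    obtain ⟨b0, hb0⟩ := B.2.2.1 _ (hBf' x hA')
    have hxb0A : x * b0 ∈ A := hsub' (Set.mem_biUnion hA' ⟨b0, hb0, rfl⟩)
    have hxmem : x ∈ Bf (x * b0) := hBf _ hxb0A
    have hkey : (x * b0) * x ∈ ({x} : Set X) :=
      hsub (Set.mem_biUnion hxb0A ⟨x, hxmem, rfl⟩)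
    have h : x * b0 * x = x := hkey
    obtain ⟨e1, e2⟩ := inv_of_weak h
    refine ⟨b0 * x * b0, ⟨e1, e2⟩, ?_⟩
    -- uniqueness
    intro y' ⟨f1, f2⟩
    have g1 : Upfamily.principal x * Upfamily.principal y' * Upfamily.principal x =
        Upfamily.principal x := by
      rw [principal_mul_principal, principal_mul_principal, f1]
    have g2 : Upfamily.principal y' * Upfamily.principal x * Upfamily.principal y' =
        Upfamily.principal y' := by
      rw [principal_mul_principal, principal_mul_principal, f2]
    have g1' : Upfamily.principal x * Upfamily.principal (b0 * x * b0) *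
        Upfamily.principal x = Upfamily.principal x := by
      rw [principal_mul_principal, principal_mul_principal, e1]
    have g2' : Upfamily.principal (b0 * x * b0) * Upfamily.principal x *
        Upfamily.principal (b0 * x * b0) = Upfamily.principal (b0 * x * b0) := by
      rw [principal_mul_principal, principal_mul_principal, e2]
    have hy' := huniq (Upfamily.principal y') ⟨hP y', g1, g2⟩
    have hz := huniq (Upfamily.principal (b0 * x * b0)) ⟨hP _, g1', g2'⟩
    exact principal_injective (hy'.trans hz.symm)
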